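/- Fix a parameter p with 1/2 < p < 1, an integer k₀ ≥ 0 and ε ∈ (0,1). Set θ̃ = Φ^{k₀}(1-p) and assume θ̃ < 1/2. Write Θ_k = max(Φ^k(1-p), 1-Φ^k(1-p)), Q = ∏_{k=0}^{k₀-1} Θ_k, θ̃_ε = (p(1-ε)θ̃ + (1-p)(1-(2-ε)θ̃))/(1-θ̃), p_ε = p(1-ε) + (1-p)ε, and Π₀ = [ Σ_{n=0}^{k₀} ∏_{k=0}^{n-1} Θ_k + Q·((1-θ̃)·w(θ̃_ε) + θ̃·w(1-p_ε)) ]⁻¹. Then Π₀·(1 + (1-ε)·θ̃·Q) > 1/w(1-p) if and only if (1-θ̃)·(w(Φ(θ̃)) - w(θ̃_ε)) > θ̃·(w(1-p_ε) - (1-ε)·w(1-p)). (The left-hand quantity is the value of the perturbed strategy σ_{k₀,ε} and 1/w(1-p) is the value of σ*.) -/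

import Mathlib

noncomputable section

/-- The map `f_B`: `f_B(θ) = (3p-1) - γ/θ` for `θ ≥ 1/2`, and `1-p` for `θ ≤ 1/2`,
where `γ = 2p - 1`. -/
def fB (p θ : ℝ) : ℝ := if 1/2 ≤ θ then (3*p - 1) - (2*p - 1)/θ else 1 - p

/-- The map `f_T`: `f_T(θ) = p` for `θ ≥ 1/2`, and `(2-3p) + γ/(1-θ)` for `θ ≤ 1/2`. -/
def fT (p θ : ℝ) : ℝ := if 1/2 ≤ θ then p else (2 - 3*p) + (2*p - 1)/(1 - θ)

/-- The belief dynamics `Φ`: `Φ(x) = f_B(x)` if `x ≥ 1/2`, `f_T(x)` otherwise. -/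
def Phi (p x : ℝ) : ℝ := if 1/2 ≤ x then fB p x else fT p x

/-- `Θ_k(θ) = max(Φ^k(θ), 1 - Φ^k(θ))`. -/
def Theta (p : ℝ) (k : ℕ) (θ : ℝ) : ℝ := max ((Phi p)^[k] θ) (1 - (Phi p)^[k] θ)

/-- `w(θ) = Σ_{n=0}^∞ ∏_{k=0}^{n-1} Θ_k(θ)` (empty product = 1). -/
def w (p θ : ℝ) : ℝ := ∑' n : ℕ, ∏ k ∈ Finset.range n, Theta p k θ

lemma Phi_mem {p : ℝ} (hp : 1/2 < p) (hp1 : p < 1) {x : ℝ} (hx : x ∈ Set.Icc (0:ℝ) 1) :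
    Phi p x ∈ Set.Icc (1-p) p := by
  obtain ⟨hx0, hx1⟩ := hx
  unfold Phi fB fT
  by_cases h : (1:ℝ)/2 ≤ x
  · simp only [h, if_true]
    have hx0' : 0 < x := by linarith
    have h1 : (2*p-1)/x ≤ 2*(2*p-1) := by rw [div_le_iff₀ hx0']; nlinarith
    have h2 : 2*p-1 ≤ (2*p-1)/x := by rw [le_div_iff₀ hx0']; nlinarith
    exact ⟨by linarith, by linarith⟩
  · simp only [h, if_false]
    push_neg at h
    have hx0' : 0 < 1 - x := by linarith
    have h1 : (2*p-1)/(1-x) ≤ 2*(2*p-1) := by rw [div_le_iff₀ hx0']; nlinarith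
    have h2 : 2*p-1 ≤ (2*p-1)/(1-x) := by rw [le_div_iff₀ hx0']; nlinarith
    constructor <;> linarith

lemma iter_mem {p : ℝ} (hp : 1/2 < p) (hp1 : p < 1) (k : ℕ) :
    (Phi p)^[k] (1-p) ∈ Set.Icc (1-p) p := by
  induction k with
  | zero => exact ⟨le_refl _, by simp; linarith⟩
  | succ n ih =>
    rw [Function.iterate_succ_apply']
    exact Phi_mem hp hp1 ⟨by linarith [ih.1], by linarith [ih.2]⟩

lemma Theta_nonneg (p : ℝ) (k : ℕ) (θ : ℝ) : 0 ≤ Theta p k θ := by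
  unfold Theta
  rcases le_total ((Phi p)^[k] θ) (1/2) with h | h
  · exact le_max_of_le_right (by linarith)
  · exact le_max_of_le_left (by linarith)

lemma Theta_le_p {p : ℝ} (hp : 1/2 < p) (hp1 : p < 1) (k : ℕ) : Theta p k (1-p) ≤ p := by
  obtain ⟨h1, h2⟩ := iter_mem hp hp1 (p := p) k
  exact max_le h2 (by linarith)

lemma summable_prods {p : ℝ} (hp : 1/2 < p) (hp1 : p < 1) :
    Summable (fun n => ∏ k ∈ Finset.range n, Theta p k (1-p)) := by
  have hp0 : (0:ℝ) ≤ p := by linarith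
  refine Summable.of_nonneg_of_le (fun n => Finset.prod_nonneg fun k _ => Theta_nonneg p k _)
    (fun n => ?_) (summable_geometric_of_lt_one hp0 hp1)
  calc ∏ k ∈ Finset.range n, Theta p k (1-p)
      ≤ ∏ k ∈ Finset.range n, p :=
        Finset.prod_le_prod (fun k _ => Theta_nonneg p k _) (fun k _ => Theta_le_p hp hp1 k)
    _ = p ^ n := by simp

lemma w_nonneg (p θ : ℝ) : 0 ≤ w p θ :=
  tsum_nonneg fun n => Finset.prod_nonneg fun k _ => Theta_nonneg p k _

lemma one_le_w {p : ℝ} (hp : 1/2 < p) (hp1 : p < 1) : 1 ≤ w p (1-p) := by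
  have := Summable.le_tsum (summable_prods hp hp1) 0
    (fun j _ => Finset.prod_nonneg fun k _ => Theta_nonneg p k _)
  simpa [w] using this

lemma w_decomp {p : ℝ} (hp : 1/2 < p) (hp1 : p < 1) (k0 : ℕ) :
    w p (1-p) = (∑ n ∈ Finset.range (k0+1), ∏ k ∈ Finset.range n, Theta p k (1-p))
      + (∏ k ∈ Finset.range k0, Theta p k (1-p)) * (Theta p k0 (1-p)
          * w p (Phi p ((Phi p)^[k0] (1-p)))) := by
  have hsum := summable_prods hp hp1
  have h := Summable.sum_add_tsum_nat_add (f := fun n => ∏ k ∈ Finset.range n, Theta p k (1-p))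
    (k0+1) hsum
  rw [w, ← h]
  congr 1
  have key : ∀ i : ℕ, (∏ k ∈ Finset.range (i + (k0+1)), Theta p k (1-p))
      = (∏ k ∈ Finset.range k0, Theta p k (1-p)) * (Theta p k0 (1-p) *
         ∏ j ∈ Finset.range i, Theta p j (Phi p ((Phi p)^[k0] (1-p)))) := by
    intro i
    rw [show i + (k0+1) = k0 + (i+1) from by omega, Finset.prod_range_add]
    congr 1
    rw [Finset.prod_range_succ']
    have h0 : Theta p (k0 + 0) (1-p) = Theta p k0 (1-p) := by norm_num
    rw [h0, mul_comm]
    congr 1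
    refine Finset.prod_congr rfl fun j _ => ?_
    show Theta p (k0 + (j+1)) (1-p) = Theta p j (Phi p ((Phi p)^[k0] (1-p)))
    unfold Theta
    rw [show k0 + (j+1) = j + 1 + k0 from by omega, Function.iterate_add_apply,
        Function.iterate_succ_apply]
  calc (∑' i : ℕ, ∏ k ∈ Finset.range (i + (k0+1)), Theta p k (1-p))
      = ∑' i : ℕ, (∏ k ∈ Finset.range k0, Theta p k (1-p)) * (Theta p k0 (1-p) *
          ∏ j ∈ Finset.range i, Theta p j (Phi p ((Phi p)^[k0] (1-p)))) :=
        tsum_congr key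
    _ = _ := by rw [tsum_mul_left, tsum_mul_left]; rfl

/-- The value of the perturbed strategy `σ_{k₀,ε}` exceeds `1/w(1-p)` (the value of
`σ*`) if and only if `(1-θ̃)(w(Φ(θ̃)) - w(θ̃_ε)) > θ̃(w(1-p_ε) - (1-ε)w(1-p))`. -/
theorem perturbed_strategy_comparison (p : ℝ) (hp : 1/2 < p) (hp1 : p < 1)
    (k0 : ℕ) (ε : ℝ) (hε : ε ∈ Set.Ioo (0:ℝ) 1)
    (θt : ℝ) (hθt : θt = (Phi p)^[k0] (1 - p)) (hlt : θt < 1/2) :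
    let Θ : ℕ → ℝ := fun k => Theta p k (1 - p)
    let Q : ℝ := ∏ k ∈ Finset.range k0, Θ k
    let θε : ℝ := (p*(1-ε)*θt + (1-p)*(1-(2-ε)*θt))/(1-θt)
    let pε : ℝ := p*(1-ε) + (1-p)*ε
    let Pi0 : ℝ := ((∑ n ∈ Finset.range (k0+1), ∏ k ∈ Finset.range n, Θ k)
        + Q*((1-θt)*w p θε + θt*w p (1-pε)))⁻¹
    (Pi0*(1 + (1-ε)*θt*Q) > 1/(w p (1-p)) ↔
      (1-θt)*(w p (Phi p θt) - w p θε) > θt*(w p (1-pε) - (1-ε)*w p (1-p))) := by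
  intro Θ Q θε pε Pi0
  obtain ⟨hε0, hε1⟩ := hε
  have hθmem := iter_mem hp hp1 (p := p) k0
  have hθ0 : 0 ≤ θt := by rw [hθt]; linarith [hθmem.1]
  have hθ1 : θt < 1 := by linarith
  -- Q > 0
  have hQpos : 0 < Q := by
    refine Finset.prod_pos fun k _ => ?_
    show (0:ℝ) < Theta p k (1-p)
    have : (1:ℝ)/2 ≤ Theta p k (1-p) := by
      unfold Theta
      rcases le_total ((Phi p)^[k] (1-p)) (1/2) with h | h
      · exact le_max_of_le_right (by linarith)
      · exact le_max_of_le_left h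
    linarith
  -- S ≥ 1
  have hSpos : (1:ℝ) ≤ ∑ n ∈ Finset.range (k0+1), ∏ k ∈ Finset.range n, Θ k := by
    have h0 : (∏ k ∈ Finset.range 0, Θ k) = 1 := by simp
    have := Finset.single_le_sum (f := fun n => ∏ k ∈ Finset.range n, Θ k)
      (fun n _ => Finset.prod_nonneg fun k _ => Theta_nonneg p k _)
      (Finset.mem_range.mpr (Nat.succ_pos k0))
    simpa [h0] using this
  have hwε : 0 ≤ w p θε := w_nonneg p θε
  have hwpε : 0 ≤ w p (1-pε) := w_nonneg p _
  have hwΦ : 0 ≤ w p (Phi p θt) := w_nonneg p _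
  have hW1 : (1:ℝ) ≤ w p (1-p) := one_le_w hp hp1
  have hWpos : 0 < w p (1-p) := by linarith
  -- D > 0
  set D : ℝ := (∑ n ∈ Finset.range (k0+1), ∏ k ∈ Finset.range n, Θ k)
      + Q*((1-θt)*w p θε + θt*w p (1-pε)) with hD
  have hDpos : 0 < D := by
    have : 0 ≤ Q*((1-θt)*w p θε + θt*w p (1-pε)) :=
      mul_nonneg hQpos.le (add_nonneg (mul_nonneg (by linarith) hwε) (mul_nonneg hθ0 hwpε))
    linarith
  -- decomposition
  have hTheta_k0 : Theta p k0 (1-p) = 1 - θt := by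
    unfold Theta
    rw [← hθt]
    exact max_eq_right (by linarith)
  have hW : w p (1-p) = (∑ n ∈ Finset.range (k0+1), ∏ k ∈ Finset.range n, Θ k)
      + Q * ((1-θt) * w p (Phi p θt)) := by
    have := w_decomp hp hp1 k0
    rw [hTheta_k0, ← hθt] at this
    exact this
  -- the key ring identity
  have hiden : (1 + (1-ε)*θt*Q) * w p (1-p) - D
      = Q * ((1-θt)*(w p (Phi p θt) - w p θε) - θt*(w p (1-pε) - (1-ε)*w p (1-p))) := by
    rw [hD, hW]; ring
  have hPi0 : Pi0 = D⁻¹ := rfl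
  rw [hPi0, gt_iff_lt, inv_mul_eq_div, div_lt_div_iff₀ hWpos hDpos, one_mul]
  rw [← sub_pos, hiden, mul_pos_iff_of_pos_left hQpos]
  exact sub_pos
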